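/- Let Θ : U → ℂ be holomorphic on an open set U ⊆ ℂ⁴ and set Θ₀ := −∂Θ/∂y and Θ₁ := ∂Θ/∂x. Then the exact identities E₀ = −∂(P(Θ))/∂y and E₁ = ∂(P(Θ))/∂x hold on U. -/

import Mathlib

noncomputable section

/-- Points of `ℂ⁴`, with coordinates `p = (x, y, w, z)`. -/
abbrev V4 : Type := ℂ × ℂ × ℂ × ℂ

/-- Coordinate directions. -/
def eX : V4 := (1, 0, 0, 0)
def eY : V4 := (0, 1, 0, 0)
def eW : V4 := (0, 0, 1, 0)
def eZ : V4 := (0, 0, 0, 1)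

/-- Directional (partial) derivative of `f` along the constant direction `v`. -/
def pd (v : V4) (f : V4 → ℂ) : V4 → ℂ := fun p => fderiv ℂ f p v

/-- The hyper-Hermitian expression
`E_C = ∂²Θ_C/∂x∂w + ∂²Θ_C/∂y∂z + (∂Θ₀/∂x − ∂Θ₁/∂y)·∂²Θ_C/∂x∂y
      + (∂Θ₁/∂x)·∂²Θ_C/∂y² − (∂Θ₀/∂y)·∂²Θ_C/∂x²`. -/
def hhE (Θ0 Θ1 ΘC : V4 → ℂ) : V4 → ℂ := fun p =>
  pd eX (pd eW ΘC) p + pd eY (pd eZ ΘC) p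
    + (pd eX Θ0 p - pd eY Θ1 p) * pd eX (pd eY ΘC) p
    + pd eX Θ1 p * pd eY (pd eY ΘC) p
    - pd eY Θ0 p * pd eX (pd eX ΘC) p


/-- The second Plebanski expression
`P(Θ) := ∂²Θ/∂x∂w + ∂²Θ/∂y∂z + (∂²Θ/∂x²)(∂²Θ/∂y²) − (∂²Θ/∂x∂y)²`. -/
def pleb (Θ : V4 → ℂ) : V4 → ℂ := fun p =>
  pd eX (pd eW Θ) p + pd eY (pd eZ Θ) p
    + pd eX (pd eX Θ) p * pd eY (pd eY Θ) p
    - (pd eX (pd eY Θ) p) ^ 2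

/-! ### Auxiliary lemmas -/

lemma AnalyticAt.pd' {f : V4 → ℂ} {p : V4} (v : V4) (hf : AnalyticAt ℂ f p) :
    AnalyticAt ℂ (pd v f) p :=
  ((ContinuousLinearMap.apply ℂ ℂ v).analyticAt _).comp hf.fderiv

lemma pd_congr (v : V4) {f g : V4 → ℂ} {p : V4} (h : f =ᶠ[nhds p] g) :
    pd v f p = pd v g p := by
  simp only [pd]; rw [h.fderiv_eq]

lemma pd_comm (u v : V4) {f : V4 → ℂ} {p : V4} (hf : AnalyticAt ℂ f p) :
    pd u (pd v f) p = pd v (pd u f) p := by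
  have hsymm : IsSymmSndFDerivAt ℂ f p :=
    (hf.contDiffAt (n := 2)).isSymmSndFDerivAt (by norm_num)
  have key : ∀ w z : V4, pd w (pd z f) p = fderiv ℂ (fderiv ℂ f) p w z := by
    intro w z
    show fderiv ℂ (fun q => (fderiv ℂ f q) z) p w = _
    rw [fderiv_clm_apply hf.fderiv.differentiableAt (differentiableAt_const z)]
    simp
  rw [key u v, key v u, hsymm u v]

lemma pd_swap23 (a b c : V4) {f : V4 → ℂ} {p : V4} (hf : AnalyticAt ℂ f p) :
    pd a (pd b (pd c f)) p = pd a (pd c (pd b f)) p := by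
  refine pd_congr a ?_
  filter_upwards [hf.eventually_analyticAt] with q hq
  exact pd_comm b c hq

lemma pd_neg (v : V4) (f : V4 → ℂ) : pd v (fun q => -f q) = fun p => -(pd v f p) := by
  funext p
  simp only [pd, fderiv_fun_neg]
  rfl

lemma pd_comb {A B C D E : V4 → ℂ} {p : V4} (v : V4)
    (hA : AnalyticAt ℂ A p) (hB : AnalyticAt ℂ B p) (hC : AnalyticAt ℂ C p)
    (hD : AnalyticAt ℂ D p) (hE : AnalyticAt ℂ E p) :
    pd v (fun q => A q + B q + C q * D q - E q ^ 2) p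
      = pd v A p + pd v B p + (pd v C p * D p + C p * pd v D p)
        - 2 * E p * pd v E p := by
  have hA' := hA.differentiableAt
  have hB' := hB.differentiableAt
  have hC' := hC.differentiableAt
  have hD' := hD.differentiableAt
  have hE' := hE.differentiableAt
  simp only [pow_two]
  show fderiv ℂ (fun q => A q + B q + C q * D q - E q * E q) p v = _
  rw [fderiv_fun_sub ((hA'.fun_add hB').fun_add (hC'.fun_mul hD')) (hE'.fun_mul hE'),
    fderiv_fun_add (hA'.fun_add hB') (hC'.fun_mul hD'), fderiv_fun_add hA' hB',
    fderiv_fun_mul hC' hD', fderiv_fun_mul hE' hE']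
  simp only [ContinuousLinearMap.sub_apply, ContinuousLinearMap.add_apply,
    ContinuousLinearMap.smul_apply, smul_eq_mul, pd]
  ring

/-- if `Θ₀ := −∂Θ/∂y` and `Θ₁ := ∂Θ/∂x` for a holomorphic `Θ`, then the
exact identities `E₀ = −∂(P(Θ))/∂y` and `E₁ = ∂(P(Θ))/∂x` hold on `U`. -/
theorem hhE_of_gradient_pair_eq_deriv_pleb
    (U : Set V4) (hU : IsOpen U) (Θ : V4 → ℂ)
    (hΘ : ∀ p ∈ U, AnalyticAt ℂ Θ p) :
    ∀ p ∈ U,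
      hhE (fun q => -(pd eY Θ q)) (pd eX Θ) (fun q => -(pd eY Θ q)) p
          = -(pd eY (pleb Θ) p) ∧
      hhE (fun q => -(pd eY Θ q)) (pd eX Θ) (pd eX Θ) p
          = pd eX (pleb Θ) p := by
  intro p hp
  have h := hΘ p hp
  -- analyticity of all the second partials
  have hXW : AnalyticAt ℂ (pd eX (pd eW Θ)) p := (h.pd' eW).pd' eX
  have hYZ : AnalyticAt ℂ (pd eY (pd eZ Θ)) p := (h.pd' eZ).pd' eY
  have hXX : AnalyticAt ℂ (pd eX (pd eX Θ)) p := (h.pd' eX).pd' eX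
  have hYY : AnalyticAt ℂ (pd eY (pd eY Θ)) p := (h.pd' eY).pd' eY
  have hXY : AnalyticAt ℂ (pd eX (pd eY Θ)) p := (h.pd' eY).pd' eX
  -- derivatives of pleb
  have hplebY := pd_comb eY hXW hYZ hXX hYY hXY
  have hplebX := pd_comb eX hXW hYZ hXX hYY hXY
  have hpleb_eq : pleb Θ = fun q => pd eX (pd eW Θ) q + pd eY (pd eZ Θ) q
      + pd eX (pd eX Θ) q * pd eY (pd eY Θ) q - pd eX (pd eY Θ) q ^ 2 := rfl
  -- second-derivative symmetry
  have sXY : pd eX (pd eY Θ) p = pd eY (pd eX Θ) p := pd_comm eX eY h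
  -- third-derivative commutations
  have c1 : pd eX (pd eW (pd eY Θ)) p = pd eY (pd eX (pd eW Θ)) p := by
    rw [pd_swap23 eX eW eY h, pd_comm eX eY (h.pd' eW)]
  have c2 : pd eY (pd eZ (pd eY Θ)) p = pd eY (pd eY (pd eZ Θ)) p :=
    pd_swap23 eY eZ eY h
  have c3 : pd eX (pd eY (pd eY Θ)) p = pd eY (pd eX (pd eY Θ)) p :=
    pd_comm eX eY (h.pd' eY)
  have c4 : pd eX (pd eX (pd eY Θ)) p = pd eY (pd eX (pd eX Θ)) p := by
    rw [pd_swap23 eX eX eY h, pd_comm eX eY (h.pd' eX)]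
  have c5 : pd eY (pd eY (pd eY Θ)) p = pd eY (pd eY (pd eY Θ)) p := rfl
  have d1 : pd eX (pd eW (pd eX Θ)) p = pd eX (pd eX (pd eW Θ)) p :=
    pd_swap23 eX eW eX h
  have d2 : pd eY (pd eZ (pd eX Θ)) p = pd eX (pd eY (pd eZ Θ)) p := by
    rw [pd_swap23 eY eZ eX h, pd_comm eY eX (h.pd' eZ)]
  have d3 : pd eX (pd eY (pd eX Θ)) p = pd eX (pd eX (pd eY Θ)) p :=
    pd_swap23 eX eY eX h
  have d4 : pd eY (pd eY (pd eX Θ)) p = pd eX (pd eY (pd eY Θ)) p := by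
    rw [pd_swap23 eY eY eX h, pd_comm eY eX (h.pd' eY)]
  constructor
  · -- E₀ = −∂(P(Θ))/∂y
    show pd eX (pd eW (fun q => -(pd eY Θ q))) p
        + pd eY (pd eZ (fun q => -(pd eY Θ q))) p
        + (pd eX (fun q => -(pd eY Θ q)) p - pd eY (pd eX Θ) p)
            * pd eX (pd eY (fun q => -(pd eY Θ q))) p
        + pd eX (pd eX Θ) p * pd eY (pd eY (fun q => -(pd eY Θ q))) p
        - pd eY (fun q => -(pd eY Θ q)) p * pd eX (pd eX (fun q => -(pd eY Θ q))) p
        = -(pd eY (pleb Θ) p)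
    rw [hpleb_eq, hplebY, pd_neg eW (pd eY Θ), pd_neg eZ (pd eY Θ),
      pd_neg eY (pd eY Θ), pd_neg eX (pd eY Θ),
      pd_neg eX (pd eW (pd eY Θ)), pd_neg eY (pd eZ (pd eY Θ)),
      pd_neg eX (pd eY (pd eY Θ)), pd_neg eY (pd eY (pd eY Θ)),
      pd_neg eX (pd eX (pd eY Θ))]
    simp only [c1, c2, c3, c4, ← sXY]
    ring
  · -- E₁ = ∂(P(Θ))/∂x
    show pd eX (pd eW (pd eX Θ)) p + pd eY (pd eZ (pd eX Θ)) p
        + (pd eX (fun q => -(pd eY Θ q)) p - pd eY (pd eX Θ) p)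
            * pd eX (pd eY (pd eX Θ)) p
        + pd eX (pd eX Θ) p * pd eY (pd eY (pd eX Θ)) p
        - pd eY (fun q => -(pd eY Θ q)) p * pd eX (pd eX (pd eX Θ)) p
        = pd eX (pleb Θ) p
    rw [hpleb_eq, hplebX, pd_neg eX (pd eY Θ), pd_neg eY (pd eY Θ)]
    simp only [d1, d2, d3, d4, ← sXY]
    ring
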